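/- (Frame Rule) Let A and B be predicates depending only on a set of variables V, and C a predicate depending only on a set of variables W, with V and W disjoint. If C is satisfiable and C ∧ A entails C ∧ B, then A entails B. -/
import Mathlib

/-- P depends only on the variables in V. -/
def DependsOnly {Var Val : Type*} (P : (Var → Val) → Prop) (V : Set Var) : Prop :=
  ∀ θ θ' : Var → Val, (∀ x ∈ V, θ x = θ' x) → (P θ ↔ P θ')

/-- Frame Rule: if C is satisfiable, depends only on W disjoint from V,
and C ∧ A ⊨ C ∧ B with A, B depending only on V, then A ⊨ B. -/
theorem frame_rule {Var Val : Type*} (A B C : (Var → Val) → Prop)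
    (V W : Set Var) (hA : DependsOnly A V) (hB : DependsOnly B V)
    (hC : DependsOnly C W) (hdisj : Disjoint V W)
    (hsat : ∃ θ, C θ)
    (h : ∀ θ, (C θ ∧ A θ) → (C θ ∧ B θ)) :
    ∀ θ, A θ → B θ := by
  intro θ hAθ
  obtain ⟨θ₀, hCθ₀⟩ := hsat
  classical
  set θ' : Var → Val := fun x => if x ∈ W then θ₀ x else θ x with hθ'
  have hV : ∀ x ∈ V, θ x = θ' x := by
    intro x hx
    have : x ∉ W := fun hw => Set.disjoint_left.mp hdisj hx hw
    simp [hθ', this]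
  have hW : ∀ x ∈ W, θ₀ x = θ' x := by
    intro x hx; simp [hθ', hx]
  have hCθ' : C θ' := (hC θ₀ θ' hW).mp hCθ₀
  have hAθ' : A θ' := (hA θ θ' hV).mp hAθ
  have := (h θ' ⟨hCθ', hAθ'⟩).2
  exact (hB θ θ' hV).mpr this
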